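/- Let p₁, p₂, p₃, p₄ ∈ ℂ³ be pairwise non-proportional null lifts with ⟨pᵢ,pⱼ⟩ ≠ 0 for all i ≠ j, with cross-ratios 𝕏₁, 𝕏₂, 𝕏₃. Then the following are equivalent: (i) p₁, p₂, p₃, p₄ lie in a common 2-dimensional complex subspace of ℂ³ (i.e. the four boundary points lie on one ℂ-circle); (ii) 𝕏₁ and 𝕏₂ are real and 𝕏₁ + 𝕏₂ = 1; (iii) 𝕏₁ and 𝕏₃ are real and 𝕏₃ + 1/𝕏₁ = 1; (iv) 𝕏₂ and 𝕏₃ are real and 1/𝕏₂ + 1/𝕏₃ = 1; (v) 𝕏₁, 𝕏₂, 𝕏₃ are all real and 𝕏₃ = −𝕏₂/𝕏₁. -/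

import Mathlib

noncomputable section

open Complex ComplexConjugate

/-- The Hermitian form of signature (2,1) on ℂ³. -/
def herm (z w : Fin 3 → ℂ) : ℂ :=
  z 0 * conj (w 2) + z 1 * conj (w 1) + z 2 * conj (w 0)

/-- A null lift: a nonzero vector with `⟨p,p⟩ = 0`. -/
def IsNullLift (p : Fin 3 → ℂ) : Prop := p ≠ 0 ∧ herm p p = 0

/-- The complex cross-ratio `𝕏(p,q,r,s) = (⟨r,p⟩·⟨s,q⟩)/(⟨s,p⟩·⟨r,q⟩)`. -/
def crossRatio (p q r s : Fin 3 → ℂ) : ℂ :=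
  (herm r p * herm s q) / (herm s p * herm r q)

/-! ### Auxiliary machinery -/

private def det3 (x y z : Fin 3 → ℂ) : ℂ :=
  x 0 * (y 1 * z 2 - y 2 * z 1) - x 1 * (y 0 * z 2 - y 2 * z 0) + x 2 * (y 0 * z 1 - y 1 * z 0)

private lemma herm_swap (z w : Fin 3 → ℂ) : herm w z = conj (herm z w) := by
  simp only [herm, map_add, map_mul, conj_conj]; ring

private lemma gram_mixed (x y z a b c : Fin 3 → ℂ) :
    herm x a * (herm y b * herm z c - herm y c * herm z b)
    - herm x b * (herm y a * herm z c - herm y c * herm z a)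
    + herm x c * (herm y a * herm z b - herm y b * herm z a)
    = -(det3 x y z * conj (det3 a b c)) := by
  simp only [herm, det3, map_add, map_mul, map_sub, conj_conj]; ring

private lemma det3_eq (x y z : Fin 3 → ℂ) : det3 x y z = (Matrix.of ![x, y, z]).det := by
  rw [Matrix.det_fin_three]; simp [det3, Matrix.of_apply]; ring

private lemma det3_eq_zero_iff (x y z : Fin 3 → ℂ) :
    det3 x y z = 0 ↔ ∃ g : Fin 3 → ℂ, g ≠ 0 ∧ g 0 • x + g 1 • y + g 2 • z = 0 := by
  rw [det3_eq, ← Matrix.exists_vecMul_eq_zero_iff]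
  refine exists_congr fun g => and_congr_right fun _ => ?_
  have : Matrix.vecMul g (Matrix.of ![x, y, z]) = g 0 • x + g 1 • y + g 2 • z := by
    funext j
    simp [Matrix.vecMul, dotProduct, Fin.sum_univ_three]
  rw [this]

private lemma det3_zero_of_mem {x y z : Fin 3 → ℂ} {W : Submodule ℂ (Fin 3 → ℂ)}
    (hW : Module.finrank ℂ W = 2) (hx : x ∈ W) (hy : y ∈ W) (hz : z ∈ W) :
    det3 x y z = 0 := by
  by_contra hd
  have hli : LinearIndependent ℂ ![x, y, z] := by
    rw [Fintype.linearIndependent_iff]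
    intro g hg
    by_contra hgn
    push_neg at hgn
    obtain ⟨i, hi⟩ := hgn
    refine hd ((det3_eq_zero_iff x y z).2 ⟨g, ?_, ?_⟩)
    · intro h0; exact hi (by rw [h0]; rfl)
    · simpa [Fin.sum_univ_three] using hg
  have hmem : ∀ i, (![x, y, z] : Fin 3 → Fin 3 → ℂ) i ∈ W := by
    intro i; fin_cases i <;> simpa
  set f : Fin 3 → W := fun i => ⟨![x, y, z] i, hmem i⟩ with hf
  have hcomp : (W.subtype ∘ f) = ![x, y, z] := rfl
  have hliW : LinearIndependent ℂ f :=
    LinearIndependent.of_comp W.subtype (by rw [hcomp]; exact hli)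
  have h3 := hliW.fintype_card_le_finrank
  rw [hW] at h3
  simp at h3

private lemma mem_span_of_det3 {x y z : Fin 3 → ℂ} (hy : y ≠ 0) (hxy : ∀ c : ℂ, x ≠ c • y)
    (hd : det3 x y z = 0) : z ∈ Submodule.span ℂ {x, y} := by
  obtain ⟨g, hg0, hrel⟩ := (det3_eq_zero_iff x y z).1 hd
  by_cases h2 : g 2 = 0
  · exfalso
    rw [h2, zero_smul, add_zero] at hrel
    by_cases h0 : g 0 = 0
    · rw [h0, zero_smul, zero_add] at hrel
      have h1 : g 1 = 0 := by
        rcases smul_eq_zero.1 hrel with h | h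
        · exact h
        · exact absurd h hy
      apply hg0; funext i; fin_cases i <;> simp [h0, h1, h2]
    · apply hxy (-(g 1) / g 0)
      funext j
      have h := congrFun hrel j
      simp only [Pi.add_apply, Pi.smul_apply, smul_eq_mul, Pi.zero_apply] at h ⊢
      field_simp
      linear_combination h
  · refine Submodule.mem_span_pair.2 ⟨-(g 0) / g 2, -(g 1) / g 2, ?_⟩
    funext j
    have h := congrFun hrel j
    simp only [Pi.add_apply, Pi.smul_apply, smul_eq_mul, Pi.zero_apply] at h ⊢
    field_simp
    linear_combination -h

private lemma range_pair (x y : Fin 3 → ℂ) : Set.range ![x, y] = {x, y} := by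
  ext v
  simp [Matrix.range_cons, Matrix.range_empty]
  tauto

private lemma span_char {p : Fin 4 → Fin 3 → ℂ} (h1ne : p 1 ≠ 0)
    (h01 : ∀ c : ℂ, p 0 ≠ c • p 1)
    (hd2 : det3 (p 0) (p 1) (p 2) = 0) (hd3 : det3 (p 0) (p 1) (p 3) = 0) :
    ∃ W : Submodule ℂ (Fin 3 → ℂ), Module.finrank ℂ W = 2 ∧ ∀ i, p i ∈ W := by
  refine ⟨Submodule.span ℂ {p 0, p 1}, ?_, ?_⟩
  · have hli : LinearIndependent ℂ ![p 0, p 1] :=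
      linearIndependent_fin2.2 ⟨h1ne, fun a h => h01 a h.symm⟩
    have := finrank_span_eq_card hli
    rw [range_pair] at this
    simpa using this
  · intro i
    fin_cases i
    · exact Submodule.subset_span (by simp)
    · exact Submodule.subset_span (by simp)
    · exact mem_span_of_det3 h1ne h01 hd2
    · exact mem_span_of_det3 h1ne h01 hd3

private lemma re_half {u d : ℂ} (h : u + conj u = -(d * conj d)) : 2 * u.re = -normSq d := by
  have := congrArg Complex.re h
  simp [Complex.add_re, Complex.conj_re, Complex.mul_conj] at this
  linarith

private lemma add_conj' (z : ℂ) : z + conj z = 2 * (z.re : ℂ) := by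
  rw [Complex.add_conj]; push_cast; ring

private lemma im_expand {u w : ℂ} (h : (conj u * w).im = 0) : u.re * w.im - u.im * w.re = 0 := by
  simp [Complex.mul_im, Complex.conj_re, Complex.conj_im] at h
  linarith

private lemma core2 (u w m T d2 d3 : ℂ) (hu0 : u ≠ 0) (hw0 : w ≠ 0)
    (hu : u + conj u = -(d2 * conj d2)) (hw : w + conj w = -(d3 * conj d3))
    (hT : T = d3 * conj d2) (hS : m * conj m + u * w + T * m ≠ 0)
    (him : (conj u * w).im = 0) (heq : u * w + conj u * w + T * m = 0) :
    d2 = 0 ∧ d3 = 0 := by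
  have hure : 2 * u.re = -normSq d2 := re_half hu
  have hwre : 2 * w.re = -normSq d3 := re_half hw
  have him' : u.re * w.im - u.im * w.re = 0 := im_expand him
  by_cases h2 : u.re = 0
  · have hui : u.im ≠ 0 := by
      intro h; exact hu0 (Complex.ext h2 h)
    have hwr : w.re = 0 := by
      have : u.im * w.re = 0 := by rw [h2] at him'; linarith
      exact (mul_eq_zero.1 this).resolve_left hui
    constructor
    · rw [← Complex.normSq_eq_zero]; linarith
    · rw [← Complex.normSq_eq_zero]; linarith
  · exfalso
    have hult : u.re < 0 := lt_of_le_of_ne (by nlinarith [normSq_nonneg d2]) h2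
    have hwr : w.re ≠ 0 := by
      intro h
      have h1 : u.re * w.im = 0 := by rw [h] at him'; linarith
      have h2' : w.im = 0 := (mul_eq_zero.1 h1).resolve_left h2
      exact hw0 (Complex.ext h h2')
    have key1 : (w.re : ℂ) * u = (u.re : ℂ) * w := by
      apply Complex.ext
      · simp [Complex.mul_re]; ring
      · simp [Complex.mul_im]; linarith
    have key2 : T * m = -(2 * (u.re : ℂ)) * w := by
      linear_combination heq - w * add_conj' u
    have hn2 : normSq d2 = -(2 * u.re) := by linarith
    have hn3 : normSq d3 = -(2 * w.re) := by linarith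
    have key3' : normSq T = 4 * u.re * w.re := by
      rw [hT, Complex.normSq_mul, Complex.normSq_conj, hn2, hn3]; ring
    have key4 : w.re * normSq m = u.re * normSq w := by
      have h1 : normSq T * normSq m = normSq (-(2 * (u.re : ℂ))) * normSq w := by
        rw [← Complex.normSq_mul, ← Complex.normSq_mul, key2]
      have h2' : normSq (-(2 * (u.re : ℂ))) = 4 * u.re ^ 2 := by
        rw [Complex.normSq_neg]
        simp [Complex.normSq_apply]
        ring
      rw [h2'] at h1
      have h3 : (4 * u.re) * (w.re * normSq m - u.re * normSq w) = 0 := by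
        linear_combination h1 - normSq m * key3'
      have h4 : w.re * normSq m - u.re * normSq w = 0 := by
        rcases mul_eq_zero.1 h3 with h | h
        · exact absurd h (by intro hh; apply h2; linarith)
        · exact h
      linarith
    have key4c : (w.re : ℂ) * ((normSq m : ℝ) : ℂ) = (u.re : ℂ) * ((normSq w : ℝ) : ℂ) := by
      exact_mod_cast congrArg (fun r : ℝ => (r : ℂ)) key4
    have final : (w.re : ℂ) * (m * conj m + u * w + T * m) = 0 := by
      have hmc : m * conj m = ((normSq m : ℝ) : ℂ) := Complex.mul_conj m
      have hwc : w * conj w = ((normSq w : ℝ) : ℂ) := Complex.mul_conj w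
      linear_combination (w.re : ℂ) * hmc + key4c - (u.re : ℂ) * hwc + w * key1
        + (w.re : ℂ) * key2 + (u.re : ℂ) * w * add_conj' w
    have hwrc : (w.re : ℂ) ≠ 0 := by exact_mod_cast hwr
    exact hS ((mul_eq_zero.1 final).resolve_left hwrc)

private lemma core3 (u w m T d2 d3 : ℂ) (hu0 : u ≠ 0) (hw0 : w ≠ 0) (hm0 : m ≠ 0)
    (hu : u + conj u = -(d2 * conj d2)) (hw : w + conj w = -(d3 * conj d3))
    (hT : T = d3 * conj d2) (hS : m * conj m + u * w + T * m ≠ 0)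
    (him : (conj u * w).im = 0)
    (heq : T * m * conj u + (m * conj m) * (u + conj u) = 0) :
    d2 = 0 ∧ d3 = 0 := by
  have hure : 2 * u.re = -normSq d2 := re_half hu
  have hwre : 2 * w.re = -normSq d3 := re_half hw
  have him' : u.re * w.im - u.im * w.re = 0 := im_expand him
  have hmc : m * conj m = ((normSq m : ℝ) : ℂ) := Complex.mul_conj m
  have hwc : w * conj w = ((normSq w : ℝ) : ℂ) := Complex.mul_conj w
  by_cases h2 : u.re = 0
  · have hui : u.im ≠ 0 := by
      intro h; exact hu0 (Complex.ext h2 h)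
    have hwr : w.re = 0 := by
      have : u.im * w.re = 0 := by rw [h2] at him'; linarith
      exact (mul_eq_zero.1 this).resolve_left hui
    constructor
    · rw [← Complex.normSq_eq_zero]; linarith
    · rw [← Complex.normSq_eq_zero]; linarith
  · exfalso
    have hult : u.re < 0 := lt_of_le_of_ne (by nlinarith [normSq_nonneg d2]) h2
    have hwr : w.re ≠ 0 := by
      intro h
      have h1 : u.re * w.im = 0 := by rw [h] at him'; linarith
      have h2' : w.im = 0 := (mul_eq_zero.1 h1).resolve_left h2
      exact hw0 (Complex.ext h h2')
    have hurc : (u.re : ℂ) ≠ 0 := by exact_mod_cast h2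
    have key1 : (w.re : ℂ) * u = (u.re : ℂ) * w := by
      apply Complex.ext
      · simp [Complex.mul_re]; ring
      · simp [Complex.mul_im]; linarith
    have key1c : (w.re : ℂ) * conj u = (u.re : ℂ) * conj w := by
      have := congrArg conj key1
      simpa [map_mul, Complex.conj_ofReal] using this
    have key2' : T * m * conj u = -(2 * (u.re : ℂ)) * ((normSq m : ℝ) : ℂ) := by
      linear_combination heq - (u + conj u) * hmc - ((normSq m : ℝ) : ℂ) * add_conj' u
    have key2'' : T * m * conj w = -(2 * (w.re : ℂ)) * ((normSq m : ℝ) : ℂ) := by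
      have e : (u.re : ℂ) * (T * m * conj w + 2 * (w.re : ℂ) * ((normSq m : ℝ) : ℂ)) = 0 := by
        linear_combination (w.re : ℂ) * key2' - T * m * key1c
      have := (mul_eq_zero.1 e).resolve_left hurc
      linear_combination this
    have key4 : w.re * normSq m = u.re * normSq w := by
      have h1 : normSq (T * m * conj w) = normSq (-(2 * (w.re : ℂ)) * ((normSq m : ℝ) : ℂ)) := by
        rw [key2'']
      have key3' : normSq T = 4 * u.re * w.re := by
        rw [hT, Complex.normSq_mul, Complex.normSq_conj]
        have hn2 : normSq d2 = -(2 * u.re) := by linarith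
        have hn3 : normSq d3 = -(2 * w.re) := by linarith
        rw [hn2, hn3]; ring
      simp only [Complex.normSq_mul, Complex.normSq_conj, Complex.normSq_neg,
        Complex.normSq_ofReal] at h1
      rw [key3'] at h1
      have hnsq2 : normSq (2 : ℂ) = 4 := by norm_num [Complex.normSq_apply]
      rw [hnsq2] at h1
      have hnm : normSq m ≠ 0 := by simpa [Complex.normSq_eq_zero] using hm0
      have h3 : (4 * w.re * normSq m) * (u.re * normSq w - w.re * normSq m) = 0 := by
        linear_combination h1
      have h4 : (4 * w.re * normSq m) ≠ 0 := by
        intro h; rcases mul_eq_zero.1 h with h | h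
        · rcases mul_eq_zero.1 h with h | h
          · norm_num at h
          · exact hwr h
        · exact hnm h
      have := (mul_eq_zero.1 h3).resolve_left h4
      linarith
    have key4c : (w.re : ℂ) * ((normSq m : ℝ) : ℂ) = (u.re : ℂ) * ((normSq w : ℝ) : ℂ) := by
      exact_mod_cast congrArg (fun r : ℝ => (r : ℂ)) key4
    have final : (w.re : ℂ) * ((m * conj m + u * w + T * m) * conj w) = 0 := by
      linear_combination (w.re : ℂ) * conj w * hmc + w * conj w * key1 + (u.re : ℂ) * w * hwc
        + (w.re : ℂ) * key2'' - w * key4c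
        + (w.re : ℂ) * ((normSq m : ℝ) : ℂ) * add_conj' w
    have hwrc : (w.re : ℂ) ≠ 0 := by exact_mod_cast hwr
    have hcw : conj w ≠ 0 := by simpa using hw0
    have := (mul_eq_zero.1 final).resolve_left hwrc
    exact hS ((mul_eq_zero.1 this).resolve_right hcw)

private lemma core4 (u w m T d2 d3 : ℂ) (hu0 : u ≠ 0) (hw0 : w ≠ 0) (hm0 : m ≠ 0)
    (hu : u + conj u = -(d2 * conj d2)) (hw : w + conj w = -(d3 * conj d3))
    (hT : T = d3 * conj d2) (hTm : T * m = 0)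
    (him2 : (m * conj m + u * w + T * m).im = 0) :
    d2 = 0 ∧ d3 = 0 := by
  have hure : 2 * u.re = -normSq d2 := re_half hu
  have hwre : 2 * w.re = -normSq d3 := re_half hw
  have hT0 : T = 0 := (mul_eq_zero.1 hTm).resolve_right hm0
  rw [hT0] at hT
  have hd : d2 = 0 ∨ d3 = 0 := by
    rcases mul_eq_zero.1 hT.symm with h | h
    · right; exact h
    · left; simpa using h
  have hmm : (m * conj m).im = 0 := by simp [Complex.mul_conj]
  have huwim : (u * w).im = 0 := by
    have := him2
    rw [hT0] at this
    simp only [zero_mul, add_zero, Complex.add_im, hmm] at this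
    linarith
  rcases hd with h | h
  · have hur : u.re = 0 := by rw [h] at hure; simp at hure; linarith
    have hui : u.im ≠ 0 := fun hh => hu0 (Complex.ext hur hh)
    have h5 : u.im = 0 ∨ w.re = 0 := by
      have := huwim
      simp [Complex.mul_im, hur] at this
      exact this
    have hwr : w.re = 0 := h5.resolve_left hui
    exact ⟨h, by rw [← Complex.normSq_eq_zero]; linarith⟩
  · have hwr : w.re = 0 := by rw [h] at hwre; simp at hwre; linarith
    have hwi : w.im ≠ 0 := fun hh => hw0 (Complex.ext hwr hh)
    have h5 : u.re = 0 ∨ w.im = 0 := by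
      have := huwim
      simp [Complex.mul_im, hwr] at this
      exact this
    have hur : u.re = 0 := h5.resolve_right hwi
    exact ⟨by rw [← Complex.normSq_eq_zero]; linarith, h⟩

private lemma core5 (u w d2 d3 : ℂ) (hu0 : u ≠ 0) (hw0 : w ≠ 0)
    (hu : u + conj u = -(d2 * conj d2)) (hw : w + conj w = -(d3 * conj d3))
    (hcc : conj u * w = -(u * w)) (him : (conj u * w).im = 0) :
    d2 = 0 ∧ d3 = 0 := by
  have hure : 2 * u.re = -normSq d2 := re_half hu
  have hwre : 2 * w.re = -normSq d3 := re_half hw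
  have him' : u.re * w.im - u.im * w.re = 0 := im_expand him
  have h0 : (u + conj u) * w = 0 := by linear_combination hcc
  have h1 : u + conj u = 0 := (mul_eq_zero.1 h0).resolve_right hw0
  have hur : u.re = 0 := by
    have := congrArg Complex.re h1
    simp [Complex.add_re, Complex.conj_re] at this
    linarith
  have hui : u.im ≠ 0 := fun hh => hu0 (Complex.ext hur hh)
  have : u.im * w.re = 0 := by rw [hur] at him'; linarith
  have hwr : w.re = 0 := (mul_eq_zero.1 this).resolve_left hui
  constructor
  · rw [← Complex.normSq_eq_zero]; linarith
  · rw [← Complex.normSq_eq_zero]; linarith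
/-- Characterisations of quadruples lying on a common ℂ-circle (i.e. in a
common 2-dimensional complex subspace of ℂ³) in terms of the cross-ratios. -/
theorem common_C_circle_TFAE (p : Fin 4 → Fin 3 → ℂ)
    (hnull : ∀ i, IsNullLift (p i))
    (hprop : ∀ i j, i ≠ j → ∀ c : ℂ, p i ≠ c • p j)
    (hne : ∀ i j, i ≠ j → herm (p i) (p j) ≠ 0)
    (X₁ X₂ X₃ : ℂ)
    (hX₁ : X₁ = crossRatio (p 0) (p 1) (p 2) (p 3))
    (hX₂ : X₂ = crossRatio (p 0) (p 2) (p 1) (p 3))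
    (hX₃ : X₃ = crossRatio (p 1) (p 2) (p 0) (p 3)) :
    [(∃ W : Submodule ℂ (Fin 3 → ℂ), Module.finrank ℂ W = 2 ∧ ∀ i, p i ∈ W),
     (X₁.im = 0 ∧ X₂.im = 0 ∧ X₁ + X₂ = 1),
     (X₁.im = 0 ∧ X₃.im = 0 ∧ X₃ + 1 / X₁ = 1),
     (X₂.im = 0 ∧ X₃.im = 0 ∧ 1 / X₂ + 1 / X₃ = 1),
     (X₁.im = 0 ∧ X₂.im = 0 ∧ X₃.im = 0 ∧ X₃ = -X₂ / X₁)].TFAE := by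
  have null0 : herm (p 0) (p 0) = 0 := (hnull 0).2
  have null1 : herm (p 1) (p 1) = 0 := (hnull 1).2
  have null2 : herm (p 2) (p 2) = 0 := (hnull 2).2
  have null3 : herm (p 3) (p 3) = 0 := (hnull 3).2
  simp only [crossRatio] at hX₁ hX₂ hX₃
  rw [herm_swap (p 0) (p 2), herm_swap (p 1) (p 3), herm_swap (p 0) (p 3),
    herm_swap (p 1) (p 2)] at hX₁
  rw [herm_swap (p 0) (p 1), herm_swap (p 2) (p 3), herm_swap (p 0) (p 3)] at hX₂
  rw [herm_swap (p 2) (p 3), herm_swap (p 1) (p 3)] at hX₃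
  set c01 := herm (p 0) (p 1) with hc01
  set c02 := herm (p 0) (p 2) with hc02
  set c03 := herm (p 0) (p 3) with hc03
  set c12 := herm (p 1) (p 2) with hc12
  set c13 := herm (p 1) (p 3) with hc13
  set c23 := herm (p 2) (p 3) with hc23
  have n01 : c01 ≠ 0 := by rw [hc01]; exact hne 0 1 (by decide)
  have n02 : c02 ≠ 0 := by rw [hc02]; exact hne 0 2 (by decide)
  have n03 : c03 ≠ 0 := by rw [hc03]; exact hne 0 3 (by decide)
  have n12 : c12 ≠ 0 := by rw [hc12]; exact hne 1 2 (by decide)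
  have n13 : c13 ≠ 0 := by rw [hc13]; exact hne 1 3 (by decide)
  have n23 : c23 ≠ 0 := by rw [hc23]; exact hne 2 3 (by decide)
  have n01' : conj c01 ≠ 0 := by simpa using n01
  have n02' : conj c02 ≠ 0 := by simpa using n02
  have n03' : conj c03 ≠ 0 := by simpa using n03
  have n12' : conj c12 ≠ 0 := by simpa using n12
  have n13' : conj c13 ≠ 0 := by simpa using n13
  have n23' : conj c23 ≠ 0 := by simpa using n23
  set d2 := det3 (p 0) (p 1) (p 2) with hd2d
  set d3 := det3 (p 0) (p 1) (p 3) with hd3d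
  set u := conj c01 * conj c12 * c02 with hud
  set w := conj c01 * conj c13 * c03 with hwd
  set m := conj c01 * conj c12 * c03 with hmd
  set T := c01 * conj c01 * conj c23 - conj c01 * conj c13 * c02 - c01 * c12 * conj c03 with hTd
  set S := c01 * conj c01 * conj c23 * m with hSd
  -- Gram identities
  have G2 := gram_mixed (p 0) (p 1) (p 2) (p 0) (p 1) (p 2)
  rw [null0, null1, null2, herm_swap (p 0) (p 1), herm_swap (p 0) (p 2),
    herm_swap (p 1) (p 2), ← hc01, ← hc02, ← hc12, ← hd2d] at G2
  have hu_eq : u + conj u = -(d2 * conj d2) := by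
    rw [hud]
    simp only [map_mul, conj_conj]
    linear_combination G2
  have G3 := gram_mixed (p 0) (p 1) (p 3) (p 0) (p 1) (p 3)
  rw [null0, null1, null3, herm_swap (p 0) (p 1), herm_swap (p 0) (p 3),
    herm_swap (p 1) (p 3), ← hc01, ← hc03, ← hc13, ← hd3d] at G3
  have hw_eq : w + conj w = -(d3 * conj d3) := by
    rw [hwd]
    simp only [map_mul, conj_conj]
    linear_combination G3
  have G23 := gram_mixed (p 0) (p 1) (p 3) (p 0) (p 1) (p 2)
  rw [null0, null1, herm_swap (p 0) (p 1), herm_swap (p 0) (p 3), herm_swap (p 1) (p 3),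
    herm_swap (p 2) (p 3), ← hc01, ← hc02, ← hc03, ← hc12, ← hc13, ← hc23,
    ← hd2d, ← hd3d] at G23
  have hT_eq : T = d3 * conj d2 := by
    rw [hTd]
    linear_combination -G23
  have hSr : S = m * conj m + u * w + T * m := by
    rw [hSd, hud, hwd, hmd, hTd]
    simp only [map_mul, conj_conj]
    ring
  have hu0 : u ≠ 0 := by
    rw [hud]; exact mul_ne_zero (mul_ne_zero n01' n12') n02
  have hw0 : w ≠ 0 := by
    rw [hwd]; exact mul_ne_zero (mul_ne_zero n01' n13') n03
  have hm0 : m ≠ 0 := by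
    rw [hmd]; exact mul_ne_zero (mul_ne_zero n01' n12') n03
  have hS0 : S ≠ 0 := by
    rw [hSd]; exact mul_ne_zero (mul_ne_zero (mul_ne_zero n01 n01') n23') hm0
  have hcu0 : conj u ≠ 0 := by simpa using hu0
  have hmm0 : m * conj m ≠ 0 := mul_ne_zero hm0 (by simpa using hm0)
  have huw0 : u * w ≠ 0 := mul_ne_zero hu0 hw0
  have hcuw0 : conj u * w ≠ 0 := mul_ne_zero hcu0 hw0
  have HX1 : X₁ * (m * conj m) = conj u * w := by
    rw [hX₁, hud, hwd, hmd]
    simp only [map_mul, conj_conj]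
    field_simp
  have HX2 : X₂ * (m * conj m) = S := by
    rw [hX₂, hSd, hmd]
    simp only [map_mul, conj_conj]
    field_simp
  have HX3 : X₃ * (u * w) = S := by
    rw [hX₃, hSd, hud, hwd, hmd]
    field_simp
  have hX1ne : X₁ ≠ 0 := by
    intro h; rw [h, zero_mul] at HX1; exact hcuw0 HX1.symm
  have hX2ne : X₂ ≠ 0 := by
    intro h; rw [h, zero_mul] at HX2; exact hS0 HX2.symm
  have hX3ne : X₃ ≠ 0 := by
    intro h; rw [h, zero_mul] at HX3; exact hS0 HX3.symm
  have e1 : (conj u * w).im = X₁.im * normSq m := by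
    rw [← HX1, Complex.mul_conj]
    simp [Complex.mul_im]
  have e2 : S.im = X₂.im * normSq m := by
    rw [← HX2, Complex.mul_conj]
    simp [Complex.mul_im]
  have e3 : (S * conj (u * w)).im = X₃.im * normSq (u * w) := by
    rw [← HX3, mul_assoc, Complex.mul_conj]
    simp [Complex.mul_im]
  have hgeo : (∃ W : Submodule ℂ (Fin 3 → ℂ), Module.finrank ℂ W = 2 ∧ ∀ i, p i ∈ W)
      ↔ (d2 = 0 ∧ d3 = 0) := by
    constructor
    · rintro ⟨W, hW2, hWm⟩
      rw [hd2d, hd3d]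
      exact ⟨det3_zero_of_mem hW2 (hWm 0) (hWm 1) (hWm 2),
        det3_zero_of_mem hW2 (hWm 0) (hWm 1) (hWm 3)⟩
    · rintro ⟨h2, h3⟩
      exact span_char (hnull 1).1 (hprop 0 1 (by decide))
        (by rw [← hd2d]; exact h2) (by rw [← hd3d]; exact h3)
  -- common consequences of d2 = 0 ∧ d3 = 0
  have fwd : d2 = 0 ∧ d3 = 0 → T = 0 ∧ u.re = 0 ∧ w.re = 0 := by
    rintro ⟨h2, h3⟩
    refine ⟨by rw [hT_eq, h3, zero_mul], ?_, ?_⟩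
    · have huu : u + conj u = 0 := by rw [hu_eq, h2]; simp
      have := congrArg Complex.re huu
      simp [Complex.add_re, Complex.conj_re] at this
      linarith
    · have hww : w + conj w = 0 := by rw [hw_eq, h3]; simp
      have := congrArg Complex.re hww
      simp [Complex.add_re, Complex.conj_re] at this
      linarith
  have iff2 : (d2 = 0 ∧ d3 = 0) ↔ (X₁.im = 0 ∧ X₂.im = 0 ∧ X₁ + X₂ = 1) := by
    constructor
    · intro hd
      obtain ⟨hT0, hur, hwr⟩ := fwd hd
      have him0 : (conj u * w).im = 0 := by
        simp [Complex.mul_im, Complex.conj_re, Complex.conj_im, hur, hwr]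
      have h1 : X₁.im = 0 := by
        have h := e1
        rw [him0] at h
        rcases mul_eq_zero.1 h.symm with h' | h'
        · exact h'
        · exact absurd h' (by simpa [Complex.normSq_eq_zero] using hm0)
      have huu : u + conj u = 0 := by rw [hu_eq, hd.1]; simp
      have hsum : X₁ + X₂ = 1 := by
        have e : (X₁ + X₂) * (m * conj m) = 1 * (m * conj m) := by
          linear_combination HX1 + HX2 + hSr + w * huu + m * hT0
        exact mul_right_cancel₀ hmm0 e
      have h2im : X₂.im = 0 := by
        have hx2 : X₂ = 1 - X₁ := by linear_combination hsum
        rw [hx2]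
        simp [Complex.sub_im, h1]
      exact ⟨h1, h2im, hsum⟩
    · rintro ⟨h1, _, h3⟩
      have him : (conj u * w).im = 0 := by rw [e1, h1, zero_mul]
      have heq : u * w + conj u * w + T * m = 0 := by
        linear_combination -HX1 - HX2 - hSr + (m * conj m) * h3
      exact core2 u w m T d2 d3 hu0 hw0 hu_eq hw_eq hT_eq
        (by rw [← hSr]; exact hS0) him heq
  have iff3 : (d2 = 0 ∧ d3 = 0) ↔ (X₁.im = 0 ∧ X₃.im = 0 ∧ X₃ + 1 / X₁ = 1) := by
    constructor
    · intro hd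
      obtain ⟨hT0, hur, hwr⟩ := fwd hd
      have him0 : (conj u * w).im = 0 := by
        simp [Complex.mul_im, Complex.conj_re, Complex.conj_im, hur, hwr]
      have h1 : X₁.im = 0 := by
        have h := e1
        rw [him0] at h
        rcases mul_eq_zero.1 h.symm with h' | h'
        · exact h'
        · exact absurd h' (by simpa [Complex.normSq_eq_zero] using hm0)
      have huu : u + conj u = 0 := by rw [hu_eq, hd.1]; simp
      have key0 : (X₁ * X₃ + 1 - X₁) * ((m * conj m) * (u * w)) = 0 := by
        linear_combination (X₃ * (u * w) - u * w) * HX1 + (conj u * w) * HX3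
          + (conj u * w) * hSr + (m * conj m) * w * huu + (conj u * w) * m * hT0
      have key : X₁ * X₃ + 1 - X₁ = 0 :=
        (mul_eq_zero.1 key0).resolve_right (mul_ne_zero hmm0 huw0)
      have hsum3 : X₃ + 1 / X₁ = 1 := by
        field_simp
        linear_combination key
      have h3im : X₃.im = 0 := by
        have hx3 : X₃ = 1 - X₁⁻¹ := by
          field_simp
          linear_combination key
        rw [hx3]
        simp [Complex.sub_im, Complex.inv_im, h1]
      exact ⟨h1, h3im, hsum3⟩
    · rintro ⟨h1, _, h3⟩
      have him : (conj u * w).im = 0 := by rw [e1, h1, zero_mul]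
      have key : X₁ * X₃ + 1 - X₁ = 0 := by
        field_simp at h3
        linear_combination h3
      have F0 : (X₁ * X₃ + 1 - X₁) * ((m * conj m) * (u * w)) = 0 := by
        rw [key, zero_mul]
      have F : S * (conj u * w) + (m * conj m) * (u * w) - (u * w) * (conj u * w) = 0 := by
        linear_combination F0 - X₃ * (u * w) * HX1 - (conj u * w) * HX3 + (u * w) * HX1
      have heqw : (T * m * conj u + (m * conj m) * (u + conj u)) * w = 0 := by
        linear_combination F - (conj u * w) * hSr
      have heq : T * m * conj u + (m * conj m) * (u + conj u) = 0 :=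
        (mul_eq_zero.1 heqw).resolve_right hw0
      exact core3 u w m T d2 d3 hu0 hw0 hm0 hu_eq hw_eq hT_eq
        (by rw [← hSr]; exact hS0) him heq
  have hmmim : (m * conj m).im = 0 := by simp [Complex.mul_conj]
  have iff4 : (d2 = 0 ∧ d3 = 0) ↔ (X₂.im = 0 ∧ X₃.im = 0 ∧ 1 / X₂ + 1 / X₃ = 1) := by
    constructor
    · intro hd
      obtain ⟨hT0, hur, hwr⟩ := fwd hd
      have hS' : S = m * conj m + u * w := by rw [hSr, hT0]; ring
      have huwim : (u * w).im = 0 := by simp [Complex.mul_im, hur, hwr]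
      have hSim : S.im = 0 := by
        rw [hS', Complex.add_im, hmmim, huwim]; ring
      have h2im : X₂.im = 0 := by
        have h := e2
        rw [hSim] at h
        rcases mul_eq_zero.1 h.symm with h' | h'
        · exact h'
        · exact absurd h' (by simpa [Complex.normSq_eq_zero] using hm0)
      have h3im : X₃.im = 0 := by
        have hcim : (conj (u * w)).im = 0 := by rw [Complex.conj_im, huwim, neg_zero]
        have hL : (S * conj (u * w)).im = 0 := by
          rw [hS', add_mul, Complex.mul_conj, Complex.mul_conj, Complex.add_im,
            Complex.mul_im, hcim, Complex.ofReal_im, Complex.ofReal_re]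
          simp
        have h := e3
        rw [hL] at h
        rcases mul_eq_zero.1 h.symm with h' | h'
        · exact h'
        · exact absurd h' (by simpa [Complex.normSq_eq_zero] using huw0)
      have key4 : (X₂ * X₃ - X₂ - X₃) * ((m * conj m) * (u * w)) = 0 := by
        linear_combination X₃ * (u * w) * HX2 - (u * w) * HX2 - (m * conj m) * HX3
          + S * HX3 + S * hSr + S * m * hT0
      have key4' : X₂ * X₃ - X₂ - X₃ = 0 :=
        (mul_eq_zero.1 key4).resolve_right (mul_ne_zero hmm0 huw0)
      have hquot : 1 / X₂ + 1 / X₃ = 1 := by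
        field_simp
        linear_combination -key4'
      exact ⟨h2im, h3im, hquot⟩
    · rintro ⟨h1, _, h3⟩
      have h3' : X₂ * X₃ - X₂ - X₃ = 0 := by
        field_simp at h3
        linear_combination -h3
      have eS : S * (S - (m * conj m + u * w)) = 0 := by
        linear_combination -(X₃ * (u * w)) * HX2 + (u * w) * HX2 + (m * conj m) * HX3
          - S * HX3 + (m * conj m) * (u * w) * h3'
      have h6 : S - (m * conj m + u * w) = 0 :=
        (mul_eq_zero.1 eS).resolve_left hS0
      have hTm : T * m = 0 := by linear_combination h6 - hSr
      have him2 : (m * conj m + u * w + T * m).im = 0 := by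
        rw [← hSr, e2, h1, zero_mul]
      exact core4 u w m T d2 d3 hu0 hw0 hm0 hu_eq hw_eq hT_eq hTm him2
  have iff5 : (d2 = 0 ∧ d3 = 0) ↔
      (X₁.im = 0 ∧ X₂.im = 0 ∧ X₃.im = 0 ∧ X₃ = -X₂ / X₁) := by
    constructor
    · intro hd
      obtain ⟨h1, h2im, _⟩ := iff2.1 hd
      obtain ⟨_, h3im, _⟩ := iff4.1 hd
      obtain ⟨hT0, hur, hwr⟩ := fwd hd
      have huu : u + conj u = 0 := by rw [hu_eq, hd.1]; simp
      have key5 : (X₃ * X₁ + X₂) * ((m * conj m) * (u * w)) = 0 := by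
        linear_combination X₁ * (m * conj m) * HX3 + S * HX1 + (u * w) * HX2 + S * w * huu
      have key5' : X₃ * X₁ + X₂ = 0 :=
        (mul_eq_zero.1 key5).resolve_right (mul_ne_zero hmm0 huw0)
      have hX35 : X₃ = -X₂ / X₁ := by
        field_simp
        linear_combination key5'
      exact ⟨h1, h2im, h3im, hX35⟩
    · rintro ⟨h1, _, _, h4⟩
      have him : (conj u * w).im = 0 := by rw [e1, h1, zero_mul]
      have h4' : X₃ * X₁ + X₂ = 0 := by
        field_simp at h4
        linear_combination h4
      have eW : S * (conj u * w + u * w) = 0 := by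
        linear_combination -(X₁ * (m * conj m)) * HX3 - S * HX1 - (u * w) * HX2
          + (m * conj m) * (u * w) * h4'
      have hcc : conj u * w = -(u * w) := by
        have h := (mul_eq_zero.1 eW).resolve_left hS0
        linear_combination h
      exact core5 u w d2 d3 hu0 hw0 hu_eq hw_eq hcc him
  tfae_have 1 ↔ 2 := hgeo.trans iff2
  tfae_have 1 ↔ 3 := hgeo.trans iff3
  tfae_have 1 ↔ 4 := hgeo.trans iff4
  tfae_have 1 ↔ 5 := hgeo.trans iff5
  tfae_finish
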